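/- Define β(c) = (∫_{ℝ³} 1/(e^{|p|²+c}+1) dp) / (∫_{ℝ³} |p|²/(e^{|p|²+c}+1) dp)^{3/5}. If 0 < B < β(−ln 3), then there exists a unique c ∈ (−ln 3, ∞) with β(c) = B. -/

import Mathlib

open Real MeasureTheory Set Filter
open scoped Topology

noncomputable def betaFn (c : ℝ) : ℝ :=
    (∫ p : EuclideanSpace ℝ (Fin 3), 1 / (exp (‖p‖ ^ 2 + c) + 1)) /
      (∫ p : EuclideanSpace ℝ (Fin 3), ‖p‖ ^ 2 / (exp (‖p‖ ^ 2 + c) + 1)) ^ ((3:ℝ) / 5)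

namespace Beta12

noncomputable def m (k : ℕ) (c : ℝ) : ℝ :=
  ∫ x in Ioi (0:ℝ), x ^ k / (exp (x ^ 2 + c) + 1)

noncomputable def q (k : ℕ) (c : ℝ) : ℝ :=
  ∫ x in Ioi (0:ℝ), x ^ k * (exp (x ^ 2 + c) / (exp (x ^ 2 + c) + 1) ^ 2)

noncomputable def κ : ℝ := 3 * (volume (Metric.ball (0 : EuclideanSpace ℝ (Fin 3)) 1)).toReal

lemma κ_pos : 0 < κ := by
  have h1 : 0 < volume (Metric.ball (0 : EuclideanSpace ℝ (Fin 3)) 1) :=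
    Metric.measure_ball_pos _ _ one_pos
  have h2 : volume (Metric.ball (0 : EuclideanSpace ℝ (Fin 3)) 1) < ⊤ :=
    measure_ball_lt_top
  have := ENNReal.toReal_pos h1.ne' h2.ne
  unfold κ; linarith

lemma f_pos (y : ℝ) : 0 < 1 / (exp y + 1) := by positivity

lemma f_le (y : ℝ) : 1 / (exp y + 1) ≤ exp (-y) := by
  rw [div_le_iff₀ (by positivity), exp_neg]
  rw [inv_mul_eq_div, le_div_iff₀ (exp_pos y)]
  nlinarith [exp_pos y]

lemma f_ge (y : ℝ) (hy : 0 ≤ y) : exp (-y) / 2 ≤ 1 / (exp y + 1) := by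
  rw [div_le_div_iff₀ (by norm_num) (by positivity), exp_neg]
  have h1 : 1 ≤ exp y := one_le_exp hy
  have h2 : 0 < exp y := exp_pos y
  rw [inv_mul_le_iff₀ h2]
  nlinarith

lemma g_pos (y : ℝ) : 0 < exp y / (exp y + 1) ^ 2 := by positivity

lemma g_le (y : ℝ) : exp y / (exp y + 1) ^ 2 ≤ exp (-y) := by
  rw [div_le_iff₀ (by positivity), exp_neg, inv_mul_eq_div, le_div_iff₀ (exp_pos y)]
  nlinarith [exp_pos y]

lemma gauss_int (k : ℕ) : IntegrableOn (fun x : ℝ => x ^ k * exp (-x ^ 2)) (Ioi 0) := by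
  have h := integrableOn_rpow_mul_exp_neg_mul_sq (b := 1) one_pos
    (s := (k : ℝ)) (by exact_mod_cast neg_one_lt_zero.trans_le (Nat.cast_nonneg k))
  refine h.congr_fun (fun x hx => ?_) measurableSet_Ioi
  beta_reduce; rw [rpow_natCast]; norm_num

lemma integrable_aux {k : ℕ} {C : ℝ} {h : ℝ → ℝ}
    (hmeas : AEStronglyMeasurable h (volume.restrict (Ioi 0)))
    (hb : ∀ x ∈ Ioi (0:ℝ), |h x| ≤ C * (x ^ k * exp (-x ^ 2))) :
    IntegrableOn h (Ioi 0) := by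
  refine Integrable.mono' (((gauss_int k).const_mul C)) hmeas ?_
  filter_upwards [ae_restrict_mem measurableSet_Ioi] with x hx
  simpa [Real.norm_eq_abs] using hb x hx

lemma cont_m (k : ℕ) (c : ℝ) :
    Continuous fun x : ℝ => x ^ k / (exp (x ^ 2 + c) + 1) := by
  apply Continuous.div (by continuity) (by continuity)
  intro x; positivity

lemma cont_q (k : ℕ) (c : ℝ) :
    Continuous fun x : ℝ => x ^ k * (exp (x ^ 2 + c) / (exp (x ^ 2 + c) + 1) ^ 2) := by
  apply Continuous.mul (by continuity)
  apply Continuous.div (by continuity) (by continuity)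
  intro x; positivity

lemma integrable_m (k : ℕ) (c : ℝ) :
    IntegrableOn (fun x : ℝ => x ^ k / (exp (x ^ 2 + c) + 1)) (Ioi 0) := by
  refine integrable_aux (k := k) (C := exp (-c)) (cont_m k c).aestronglyMeasurable ?_
  intro x hx
  have hx0 : (0:ℝ) < x := hx
  rw [abs_of_nonneg (by positivity)]
  have := f_le (x ^ 2 + c)
  calc x ^ k / (exp (x ^ 2 + c) + 1) = x ^ k * (1 / (exp (x ^ 2 + c) + 1)) := by ring
    _ ≤ x ^ k * exp (-(x ^ 2 + c)) := by
        exact mul_le_mul_of_nonneg_left this (by positivity)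
    _ = exp (-c) * (x ^ k * exp (-x ^ 2)) := by rw [neg_add, Real.exp_add]; ring

lemma integrable_q (k : ℕ) (c : ℝ) :
    IntegrableOn (fun x : ℝ => x ^ k * (exp (x ^ 2 + c) / (exp (x ^ 2 + c) + 1) ^ 2))
      (Ioi 0) := by
  refine integrable_aux (k := k) (C := exp (-c)) (cont_q k c).aestronglyMeasurable ?_
  intro x hx
  have hx0 : (0:ℝ) < x := hx
  rw [abs_of_nonneg (by positivity)]
  have := g_le (x ^ 2 + c)
  calc x ^ k * (exp (x ^ 2 + c) / (exp (x ^ 2 + c) + 1) ^ 2)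
      ≤ x ^ k * exp (-(x ^ 2 + c)) := mul_le_mul_of_nonneg_left this (by positivity)
    _ = exp (-c) * (x ^ k * exp (-x ^ 2)) := by rw [neg_add, Real.exp_add]; ring

lemma q_pos (k : ℕ) (c : ℝ) : 0 < q k c := by
  unfold q
  rw [setIntegral_pos_iff_support_of_nonneg_ae ?_ (integrable_q k c)]
  · refine lt_of_lt_of_le ?_ (measure_mono (fun x hx => ⟨?_, hx⟩))
    · rw [Real.volume_Ioi]; exact ENNReal.zero_lt_top
    · have hx : (0:ℝ) < x := hx
      have : 0 < x ^ k * (exp (x ^ 2 + c) / (exp (x ^ 2 + c) + 1) ^ 2) := by positivity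
      exact Function.mem_support.2 this.ne'
  · filter_upwards [ae_restrict_mem measurableSet_Ioi] with x hx
    have hx : (0:ℝ) < x := hx
    positivity

lemma m_pos (k : ℕ) (c : ℝ) : 0 < m k c := by
  unfold m
  rw [setIntegral_pos_iff_support_of_nonneg_ae ?_ (integrable_m k c)]
  · refine lt_of_lt_of_le ?_ (measure_mono (fun x hx => ⟨?_, hx⟩))
    · rw [Real.volume_Ioi]; exact ENNReal.zero_lt_top
    · have hx : (0:ℝ) < x := hx
      have : 0 < x ^ k / (exp (x ^ 2 + c) + 1) := by positivity
      exact Function.mem_support.2 this.ne'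
  · filter_upwards [ae_restrict_mem measurableSet_Ioi] with x hx
    have hx : (0:ℝ) < x := hx
    positivity

lemma hasDerivAt_m (k : ℕ) (c₀ : ℝ) : HasDerivAt (m k) (-q k c₀) c₀ := by
  have key := hasDerivAt_integral_of_dominated_loc_of_deriv_le
    (μ := volume.restrict (Ioi 0))
    (F := fun c x => x ^ k / (exp (x ^ 2 + c) + 1))
    (F' := fun c x => -(x ^ k * (exp (x ^ 2 + c) / (exp (x ^ 2 + c) + 1) ^ 2)))
    (x₀ := c₀)
    (bound := fun x => exp (1 - c₀) * (x ^ k * exp (-x ^ 2)))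
    (Metric.ball_mem_nhds c₀ one_pos)
    (Eventually.of_forall fun c => (cont_m k c).aestronglyMeasurable)
    (integrable_m k c₀)
    ((cont_q k c₀).neg.aestronglyMeasurable)
    ?_ ((gauss_int k).const_mul _) ?_
  · have h2 := key.2
    have : (∫ x in Ioi (0:ℝ), -(x ^ k * (exp (x ^ 2 + c₀) / (exp (x ^ 2 + c₀) + 1) ^ 2)))
        = -q k c₀ := by rw [integral_neg]; rfl
    rw [this] at h2
    exact h2
  · filter_upwards [ae_restrict_mem measurableSet_Ioi] with x hx c hc
    have hx : (0:ℝ) < x := hx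
    have hc' : -c ≤ 1 - c₀ := by
      have h := Metric.mem_ball.1 hc
      rw [Real.dist_eq] at h
      have := abs_sub_lt_iff.1 h
      linarith [this.2]
    rw [norm_neg, Real.norm_eq_abs, abs_of_nonneg (by positivity)]
    calc x ^ k * (exp (x ^ 2 + c) / (exp (x ^ 2 + c) + 1) ^ 2)
        ≤ x ^ k * exp (-(x ^ 2 + c)) :=
          mul_le_mul_of_nonneg_left (g_le _) (by positivity)
      _ = exp (-c) * (x ^ k * exp (-x ^ 2)) := by rw [neg_add, Real.exp_add]; ring
      _ ≤ exp (1 - c₀) * (x ^ k * exp (-x ^ 2)) := by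
          apply mul_le_mul_of_nonneg_right (exp_le_exp.2 hc') (by positivity)
  · filter_upwards [ae_restrict_mem measurableSet_Ioi] with x hx c _
    have h1 : HasDerivAt (fun c : ℝ => x ^ 2 + c) 1 c := (hasDerivAt_id c).const_add (x ^ 2)
    have h2 := h1.exp
    have h3 := (h2.add_const 1).inv (by positivity)
    have h4 := h3.const_mul (x ^ k)
    have h5 : (fun y : ℝ => x ^ k * (exp (x ^ 2 + y) + 1)⁻¹)
        = fun y : ℝ => x ^ k / (exp (x ^ 2 + y) + 1) := by
      funext y; rw [div_eq_mul_inv]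
    have h6 : x ^ k * (-(exp (x ^ 2 + c) * 1) / (exp (x ^ 2 + c) + 1) ^ 2)
        = -(x ^ k * (exp (x ^ 2 + c) / (exp (x ^ 2 + c) + 1) ^ 2)) := by ring
    simp only [Pi.inv_apply] at h4
    rw [h5, h6] at h4
    exact h4

lemma ibp (k : ℕ) (c : ℝ) : m k c = (2 / (k + 1)) * q (k + 2) c := by
  set G : ℝ → ℝ := fun x => (1 / ((k:ℝ) + 1)) * (x ^ (k + 1) * (exp (x ^ 2 + c) + 1)⁻¹)
    with hG
  set G' : ℝ → ℝ := fun x => x ^ k / (exp (x ^ 2 + c) + 1)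
    - (2 / ((k:ℝ) + 1)) * (x ^ (k + 2) * (exp (x ^ 2 + c) / (exp (x ^ 2 + c) + 1) ^ 2))
    with hG'
  have hk1 : ((k:ℝ) + 1) ≠ 0 := by positivity
  have hderiv : ∀ x ∈ Ici (0:ℝ), HasDerivAt G (G' x) x := by
    intro x _
    have h1 : HasDerivAt (fun x : ℝ => x ^ (k + 1)) (((k:ℝ) + 1) * x ^ k) x := by
      simpa using hasDerivAt_pow (k + 1) x
    have h2 : HasDerivAt (fun x : ℝ => exp (x ^ 2 + c) + 1) (exp (x ^ 2 + c) * (2 * x)) x := by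
      have := ((hasDerivAt_pow 2 x).add_const c).exp
      simpa using this.add_const 1
    have h3 := h2.inv (by positivity)
    have h4 := (h1.mul h3).const_mul (1 / ((k:ℝ) + 1))
    refine h4.congr_deriv (Eq.symm ?_)
    simp only [Pi.inv_apply]
    rw [hG']
    have hu : exp (x ^ 2 + c) + 1 ≠ 0 := by positivity
    field_simp
    ring
  have hint : IntegrableOn G' (Ioi 0) :=
    (integrable_m k c).sub ((integrable_q (k + 2) c).const_mul _)
  have htend : Tendsto G atTop (𝓝 0) := by
    have hlo : (fun x : ℝ => x ^ ((k:ℝ) + 1) * exp (-1 * x ^ 2)) =o[atTop]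
        fun x => exp (-(1/2) * x) := rpow_mul_exp_neg_mul_sq_isLittleO_exp_neg one_pos _
    have hexp : Tendsto (fun x : ℝ => exp (-(1/2) * x)) atTop (𝓝 0) := by
      have h1 : Tendsto (fun x : ℝ => (1/2 : ℝ) * x) atTop atTop := by
        simpa using tendsto_id.const_mul_atTop (show (0:ℝ) < 1/2 by norm_num)
      have := tendsto_exp_neg_atTop_nhds_zero.comp h1
      exact this.congr fun x => by simp [Function.comp_apply, neg_mul]
    have h0 : Tendsto (fun x : ℝ => x ^ ((k:ℝ) + 1) * exp (-1 * x ^ 2)) atTop (𝓝 0) :=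
      hlo.isBigO.trans_tendsto hexp
    have h0' : Tendsto (fun x : ℝ => x ^ (k + 1) * exp (-x ^ 2)) atTop (𝓝 0) := by
      refine h0.congr' ?_
      filter_upwards [eventually_gt_atTop (0:ℝ)] with x hx
      rw [neg_one_mul]
      congr 1
      rw [show ((k:ℝ) + 1) = ((k + 1 : ℕ) : ℝ) by push_cast; ring, rpow_natCast]
    have hb : Tendsto (fun x : ℝ => (1 / ((k:ℝ) + 1)) * exp (-c) *
        (x ^ (k + 1) * exp (-x ^ 2))) atTop (𝓝 0) := by
      simpa using h0'.const_mul ((1 / ((k:ℝ) + 1)) * exp (-c))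
    refine squeeze_zero' ?_ ?_ hb
    · filter_upwards [eventually_gt_atTop (0:ℝ)] with x hx
      rw [hG]
      positivity
    · filter_upwards [eventually_gt_atTop (0:ℝ)] with x hx
      rw [hG]
      have := f_le (x ^ 2 + c)
      rw [one_div] at this
      calc (1 / ((k:ℝ) + 1)) * (x ^ (k + 1) * (exp (x ^ 2 + c) + 1)⁻¹)
          ≤ (1 / ((k:ℝ) + 1)) * (x ^ (k + 1) * exp (-(x ^ 2 + c))) := by
            apply mul_le_mul_of_nonneg_left _ (by positivity)
            exact mul_le_mul_of_nonneg_left this (by positivity)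
        _ = (1 / ((k:ℝ) + 1)) * exp (-c) * (x ^ (k + 1) * exp (-x ^ 2)) := by
            rw [neg_add, Real.exp_add]; ring
  have h := integral_Ioi_of_hasDerivAt_of_tendsto' (f := G) (f' := G') (a := 0)
    (fun x hx => hderiv x hx) hint htend
  have hG0 : G 0 = 0 := by simp [hG]
  rw [hG0, sub_zero] at h
  have hsplit : (∫ x in Ioi (0:ℝ), G' x) = m k c - (2 / ((k:ℝ) + 1)) * q (k + 2) c := by
    rw [hG']
    rw [integral_sub (integrable_m k c) ((integrable_q (k + 2) c).const_mul _),
      integral_const_mul]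
    rfl
  rw [hsplit] at h
  push_cast
  linarith

lemma cs (c : ℝ) : q 4 c ^ 2 < q 2 c * q 6 c := by
  have ha := q_pos 2 c
  have hb := q_pos 4 c
  have he := q_pos 6 c
  set a := q 2 c with hA
  set b := q 4 c with hB
  set e := q 6 c with hE
  set t : ℝ := b / a with hT
  set G : ℝ → ℝ := fun x => exp (x ^ 2 + c) / (exp (x ^ 2 + c) + 1) ^ 2 with hGdef
  have hsub : IntegrableOn
      (fun x : ℝ => t ^ 2 * (x ^ 2 * G x) - 2 * t * (x ^ 4 * G x)) (Ioi 0) :=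
    ((integrable_q 2 c).const_mul _).sub ((integrable_q 4 c).const_mul _)
  have hint : IntegrableOn
      (fun x : ℝ => t ^ 2 * (x ^ 2 * G x) - 2 * t * (x ^ 4 * G x) + x ^ 6 * G x) (Ioi 0) :=
    hsub.add (integrable_q 6 c)
  have hval : (∫ x in Ioi (0:ℝ),
      (t ^ 2 * (x ^ 2 * G x) - 2 * t * (x ^ 4 * G x) + x ^ 6 * G x))
      = t ^ 2 * a - 2 * t * b + e := by
    rw [integral_add hsub (integrable_q 6 c),
      integral_sub ((integrable_q 2 c).const_mul _) ((integrable_q 4 c).const_mul _),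
      integral_const_mul, integral_const_mul]
    rfl
  have hpos : 0 < ∫ x in Ioi (0:ℝ),
      (t ^ 2 * (x ^ 2 * G x) - 2 * t * (x ^ 4 * G x) + x ^ 6 * G x) := by
    rw [setIntegral_pos_iff_support_of_nonneg_ae ?_ hint]
    · refine lt_of_lt_of_le (b := volume (Ioi (0:ℝ) \ {Real.sqrt t})) ?_ (measure_mono ?_)
      · rw [measure_diff_null (volume_singleton), Real.volume_Ioi]
        exact ENNReal.zero_lt_top
      · rintro x ⟨hx, hxs⟩
        refine ⟨Function.mem_support.2 ?_, hx⟩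
        have hx0 : (0:ℝ) < x := hx
        have hG : 0 < G x := by rw [hGdef]; positivity
        have hne : t - x ^ 2 ≠ 0 := by
          intro h
          apply hxs
          have : t = x ^ 2 := by linarith
          simp only [mem_singleton_iff]
          rw [this, Real.sqrt_sq hx0.le]
        have : t ^ 2 * (x ^ 2 * G x) - 2 * t * (x ^ 4 * G x) + x ^ 6 * G x
            = x ^ 2 * G x * (t - x ^ 2) ^ 2 := by ring
        rw [this]
        positivity
    · filter_upwards [ae_restrict_mem measurableSet_Ioi] with x hx
      have hx0 : (0:ℝ) < x := hx
      have hG : 0 ≤ G x := by rw [hGdef]; positivity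
      have : t ^ 2 * (x ^ 2 * G x) - 2 * t * (x ^ 4 * G x) + x ^ 6 * G x
          = x ^ 2 * G x * (t - x ^ 2) ^ 2 := by ring
      rw [this]
      positivity
  rw [hval] at hpos
  have h2 : t ^ 2 * a - 2 * t * b + e = e - b ^ 2 / a := by
    rw [hT]; field_simp; ring
  rw [h2] at hpos
  have := (div_lt_iff₀ ha).1 (by linarith : b ^ 2 / a < e)
  linarith

lemma N_eq (c : ℝ) :
    (∫ p : EuclideanSpace ℝ (Fin 3), 1 / (exp (‖p‖ ^ 2 + c) + 1)) = κ * m 2 c := by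
  have h := MeasureTheory.integral_fun_norm_addHaar
    (volume : Measure (EuclideanSpace ℝ (Fin 3)))
    (fun r : ℝ => 1 / (exp (r ^ 2 + c) + 1))
  simp only [finrank_euclideanSpace_fin, smul_eq_mul, nsmul_eq_mul, Nat.cast_ofNat] at h
  rw [h]
  unfold κ m
  rw [mul_assoc]
  congr 2
  refine setIntegral_congr_fun measurableSet_Ioi fun x hx => ?_
  norm_num [mul_one_div, div_eq_mul_inv]

lemma D_eq (c : ℝ) :
    (∫ p : EuclideanSpace ℝ (Fin 3), ‖p‖ ^ 2 / (exp (‖p‖ ^ 2 + c) + 1)) = κ * m 4 c := by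
  have h := MeasureTheory.integral_fun_norm_addHaar
    (volume : Measure (EuclideanSpace ℝ (Fin 3)))
    (fun r : ℝ => r ^ 2 / (exp (r ^ 2 + c) + 1))
  simp only [finrank_euclideanSpace_fin, smul_eq_mul, nsmul_eq_mul, Nat.cast_ofNat] at h
  rw [h]
  unfold κ m
  rw [mul_assoc]
  congr 2
  refine setIntegral_congr_fun measurableSet_Ioi fun x hx => ?_
  norm_num [mul_div_assoc']
  ring

lemma beta_eq : betaFn = fun c => (κ * m 2 c) / (κ * m 4 c) ^ ((3:ℝ)/5) := by
  funext c
  unfold betaFn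
  rw [N_eq, D_eq]

lemma beta_deriv (c : ℝ) : ∃ d, HasDerivAt betaFn d c ∧ d < 0 := by
  have hD : 0 < κ * m 4 c := mul_pos κ_pos (m_pos 4 c)
  have h1 := (hasDerivAt_m 2 c).const_mul κ
  have h3 := ((hasDerivAt_m 4 c).const_mul κ).rpow_const (p := (3:ℝ)/5) (Or.inl hD.ne')
  have h4 := h1.div h3 (ne_of_gt (rpow_pos_of_pos hD _))
  refine ⟨(κ * -q 2 c * (κ * m 4 c) ^ ((3:ℝ)/5) -
      κ * m 2 c * (κ * -q 4 c * ((3:ℝ)/5) * (κ * m 4 c) ^ ((3:ℝ)/5 - 1))) /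
      ((κ * m 4 c) ^ ((3:ℝ)/5)) ^ 2, ?_, ?_⟩
  · rw [beta_eq]; exact h4
  · set X := (κ * m 4 c) ^ ((3:ℝ)/5) with hXdef
    have hX : 0 < X := rpow_pos_of_pos hD _
    have hsub : (κ * m 4 c) ^ ((3:ℝ)/5 - 1) = X / (κ * m 4 c) := by
      rw [hXdef, Real.rpow_sub hD, Real.rpow_one]
    apply div_neg_of_neg_of_pos _ (by positivity)
    have hκ := κ_pos
    have ha := q_pos 2 c
    have hb := q_pos 4 c
    have he := q_pos 6 c
    have hcs := cs c
    have hm2 : m 2 c = 2/3 * q 4 c := by have := ibp 2 c; push_cast at this; linarith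
    have hm4 : m 4 c = 2/5 * q 6 c := by have := ibp 4 c; push_cast at this; linarith
    rw [hsub, hm2, hm4]
    have hkey : κ * -q 2 c * X - κ * (2/3 * q 4 c) *
        (κ * -q 4 c * ((3:ℝ)/5) * (X / (κ * (2/5 * q 6 c))))
        = κ * X * (q 4 c ^ 2 - q 2 c * q 6 c) / q 6 c := by
      field_simp
      ring
    rw [hkey]
    apply div_neg_of_neg_of_pos _ he
    have h5 : 0 < κ * X := mul_pos hκ hX
    nlinarith [mul_pos h5 (sub_pos.2 hcs)]

lemma beta_anti : StrictAnti betaFn := by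
  apply strictAnti_of_deriv_neg
  intro c
  obtain ⟨d, hd, h0⟩ := beta_deriv c
  rw [hd.deriv]
  exact h0

lemma beta_cont : Continuous betaFn := by
  have : Differentiable ℝ betaFn := fun c => ((beta_deriv c).choose_spec.1).differentiableAt
  exact this.continuous

lemma gauss_pos (k : ℕ) : 0 < ∫ x in Ioi (0:ℝ), x ^ k * exp (-x ^ 2) := by
  rw [setIntegral_pos_iff_support_of_nonneg_ae ?_ (gauss_int k)]
  · refine lt_of_lt_of_le ?_ (measure_mono (fun x hx => ⟨?_, hx⟩))
    · rw [Real.volume_Ioi]; exact ENNReal.zero_lt_top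
    · have hx : (0:ℝ) < x := hx
      have : 0 < x ^ k * exp (-x ^ 2) := by positivity
      exact Function.mem_support.2 this.ne'
  · filter_upwards [ae_restrict_mem measurableSet_Ioi] with x hx
    have hx : (0:ℝ) < x := hx
    positivity

noncomputable def I2 : ℝ := ∫ x in Ioi (0:ℝ), x ^ 2 * exp (-x ^ 2)
noncomputable def I4 : ℝ := ∫ x in Ioi (0:ℝ), x ^ 4 * exp (-x ^ 2)

lemma m2_le (c : ℝ) : m 2 c ≤ exp (-c) * I2 := by
  unfold m I2
  rw [← integral_const_mul]
  refine setIntegral_mono_on (integrable_m 2 c) ((gauss_int 2).const_mul _)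
    measurableSet_Ioi fun x hx => ?_
  have hx : (0:ℝ) < x := hx
  calc x ^ 2 / (exp (x ^ 2 + c) + 1) = x ^ 2 * (1 / (exp (x ^ 2 + c) + 1)) := by ring
    _ ≤ x ^ 2 * exp (-(x ^ 2 + c)) := mul_le_mul_of_nonneg_left (f_le _) (by positivity)
    _ = exp (-c) * (x ^ 2 * exp (-x ^ 2)) := by rw [neg_add, Real.exp_add]; ring

lemma m4_ge (c : ℝ) (hc : 0 ≤ c) : exp (-c) / 2 * I4 ≤ m 4 c := by
  unfold m I4
  rw [← integral_const_mul]
  refine setIntegral_mono_on ((gauss_int 4).const_mul _) (integrable_m 4 c)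
    measurableSet_Ioi fun x hx => ?_
  have hx : (0:ℝ) < x := hx
  have h := f_ge (x ^ 2 + c) (by positivity)
  calc exp (-c) / 2 * (x ^ 4 * exp (-x ^ 2))
      = x ^ 4 * (exp (-(x ^ 2 + c)) / 2) := by rw [neg_add, Real.exp_add]; ring
    _ ≤ x ^ 4 * (1 / (exp (x ^ 2 + c) + 1)) := mul_le_mul_of_nonneg_left h (by positivity)
    _ = x ^ 4 / (exp (x ^ 2 + c) + 1) := by ring

lemma beta_le (c : ℝ) (hc : 0 ≤ c) :
    betaFn c ≤ κ * (exp (-c) * I2) / (κ * (exp (-c) / 2 * I4)) ^ ((3:ℝ)/5) := by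
  have hI2 : 0 < I2 := gauss_pos 2
  have hI4 : 0 < I4 := gauss_pos 4
  have hκ := κ_pos
  rw [beta_eq]
  refine div_le_div₀ (by positivity) ?_ (rpow_pos_of_pos (by positivity) _) ?_
  · exact mul_le_mul_of_nonneg_left (m2_le c) hκ.le
  · exact Real.rpow_le_rpow (by positivity)
      (mul_le_mul_of_nonneg_left (m4_ge c hc) hκ.le) (by norm_num)

lemma beta_tail : ∃ c₁ : ℝ, -Real.log 3 < c₁ ∧ ∀ B : ℝ, 0 < B →
    ∃ c₂, c₁ < c₂ ∧ betaFn c₂ < B := by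
  have hI2 : 0 < I2 := gauss_pos 2
  have hI4 : 0 < I4 := gauss_pos 4
  have hκ := κ_pos
  set K : ℝ := κ * I2 / (κ * (I4 / 2)) ^ ((3:ℝ)/5) with hK
  have hbd : ∀ c : ℝ, κ * (exp (-c) * I2) / (κ * (exp (-c) / 2 * I4)) ^ ((3:ℝ)/5)
      = K * exp (-(2/5) * c) := by
    intro c
    have hA : (0:ℝ) < κ * (I4 / 2) := by positivity
    rw [show κ * (exp (-c) / 2 * I4) = κ * (I4 / 2) * exp (-c) by ring,
      Real.mul_rpow hA.le (exp_pos _).le, ← Real.exp_mul,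
      show -c = -(2/5) * c + -c * ((3:ℝ)/5) by ring, Real.exp_add, hK]
    have hX : (0:ℝ) < exp (-c * ((3:ℝ)/5)) := exp_pos _
    have hY : (0:ℝ) < (κ * (I4 / 2)) ^ ((3:ℝ)/5) := rpow_pos_of_pos hA _
    field_simp
    ring
  have htend : Tendsto (fun c : ℝ => K * exp (-(2/5) * c)) atTop (𝓝 0) := by
    have h1 : Tendsto (fun x : ℝ => (2/5 : ℝ) * x) atTop atTop := by
      simpa using tendsto_id.const_mul_atTop (show (0:ℝ) < 2/5 by norm_num)
    have h2 := tendsto_exp_neg_atTop_nhds_zero.comp h1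
    have h3 : Tendsto (fun c : ℝ => exp (-(2/5) * c)) atTop (𝓝 0) :=
      h2.congr fun x => by simp [Function.comp_apply, neg_mul]
    simpa using h3.const_mul K
  refine ⟨max 0 (-Real.log 3 + 1), lt_of_lt_of_le (by linarith) (le_max_right _ _), ?_⟩
  intro B hB
  have hev : ∀ᶠ c in atTop, K * exp (-(2/5) * c) < B := htend.eventually_lt_const hB
  obtain ⟨c₂, hc₂, hc₂B⟩ := ((eventually_gt_atTop (max 0 (-Real.log 3 + 1))).and hev).exists
  refine ⟨c₂, hc₂, ?_⟩
  have hc₂0 : 0 ≤ c₂ := le_of_lt (lt_of_le_of_lt (le_max_left _ _) hc₂)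
  calc betaFn c₂ ≤ _ := beta_le c₂ hc₂0
    _ = K * exp (-(2/5) * c₂) := hbd c₂
    _ < B := hc₂B

end Beta12

theorem stmt_12 (B : ℝ) (hB0 : 0 < B) (hB1 : B < betaFn (-Real.log 3)) :
    ∃! c : ℝ, c ∈ Set.Ioi (-Real.log 3) ∧ betaFn c = B := by
  obtain ⟨c₁, hc₁, h⟩ := Beta12.beta_tail
  obtain ⟨c₂, hc₂, hc₂B⟩ := h B hB0
  have hle : -Real.log 3 ≤ c₂ := le_of_lt (hc₁.trans hc₂)
  have key := intermediate_value_Ioo' hle Beta12.beta_cont.continuousOn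
  have hB : B ∈ Ioo (betaFn c₂) (betaFn (-Real.log 3)) := ⟨hc₂B, hB1⟩
  obtain ⟨c, hc, hcB⟩ := key hB
  refine ⟨c, ⟨hc.1, hcB⟩, ?_⟩
  rintro y ⟨hy, hyB⟩
  exact Beta12.beta_anti.injective (hyB.trans hcB.symm)
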